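/- Let μ and ν be partitions. Then the ℚ-algebra endomorphism of ℚ[p_1, p_2, …] sending p_k ↦ −p_k for every k maps the skew Schur polynomial S_{μ/ν} to (−1)^{|μ|+|ν|} S_{μᵀ/νᵀ}, i.e. S_{μ/ν}(−p) = (−1)^{|μ|+|ν|} S_{μᵀ/νᵀ}(p). -/

import Mathlib

/-- A partition: a non-increasing sequence of non-negative integers
with only finitely many nonzero terms.  `part i` is the part `μ_{i+1}`
(0-based indexing). -/
structure NPartition where
  part : ℕ → ℕ
  antitone : ∀ ⦃i j : ℕ⦄, i ≤ j → part j ≤ part i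
  eventually_zero : ∃ N : ℕ, ∀ i : ℕ, N ≤ i → part i = 0

/-- The conjugate partition: `conj f j = #{i ≥ 1 : f_i ≥ j+1}`. -/
noncomputable def conj (f : ℕ → ℕ) (j : ℕ) : ℕ :=
  Nat.card {i : ℕ // j + 1 ≤ f i}

/-- The number of nonzero parts `ℓ(μ)`. -/
noncomputable def plen (f : ℕ → ℕ) : ℕ :=
  Nat.card {i : ℕ // f i ≠ 0}

/-- The weight `|μ| = Σ_i μ_i`. -/
noncomputable def wsum (f : ℕ → ℕ) : ℕ := ∑ᶠ i : ℕ, f i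

/-- The complete homogeneous generators `h_m ∈ ℚ[p_1, p_2, …]`
(with `p_k` the variable `X (k-1)`), characterized by `h_0 = 1` and the
Newton-type recursion `(m+1) h_{m+1} = Σ_{k=1}^{m+1} p_k h_{m+1-k}`, which is
equivalent (over ℚ) to `Σ_{m≥0} h_m z^m = exp(Σ_{k≥1} (p_k/k) z^k)`. -/
noncomputable def hp : ℕ → MvPolynomial ℕ ℚ
  | 0 => 1
  | m + 1 =>
      ((m : ℚ) + 1)⁻¹ • ∑ k ∈ Finset.range (m + 1), MvPolynomial.X k * hp (m - k)
  decreasing_by exact Nat.lt_succ_of_le (Nat.sub_le m k)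

/-- `h_m` for `m ∈ ℤ`, with `h_m = 0` for `m < 0`. -/
noncomputable def hInt (m : ℤ) : MvPolynomial ℕ ℚ :=
  if 0 ≤ m then hp m.toNat else 0

/-- The skew Jacobi–Trudi determinant
`S_{μ/ν} = det(h_{μ_i − ν_j − i + j})_{1 ≤ i,j ≤ n}` (0-based indexing of parts). -/
noncomputable def Sdet (f g : ℕ → ℕ) (n : ℕ) : MvPolynomial ℕ ℚ :=
  Matrix.det (Matrix.of fun i j : Fin n =>
    hInt ((f i : ℤ) - (g j : ℤ) - (i : ℤ) + (j : ℤ)))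


namespace SkewAux
open Finset MvPolynomial PowerSeries

noncomputable def phi : MvPolynomial ℕ ℚ →ₐ[ℚ] MvPolynomial ℕ ℚ := aeval fun k => - X k
noncomputable def gp (m : ℕ) : MvPolynomial ℕ ℚ := phi (hp m)

lemma hp_zero : hp 0 = 1 := by rw [hp]
lemma gp_zero : gp 0 = 1 := by simp [gp, hp_zero]

lemma hp_rec (m : ℕ) : ((m : ℚ) + 1) • hp (m+1) = ∑ k ∈ range (m+1), X k * hp (m - k) := by
  rw [hp, smul_smul, mul_inv_cancel₀, one_smul]
  exact Nat.cast_add_one_ne_zero m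

lemma gp_rec (m : ℕ) : ((m : ℚ) + 1) • gp (m+1) = -∑ k ∈ range (m+1), X k * gp (m - k) := by
  have := congrArg phi (hp_rec m)
  rw [map_smul, map_sum] at this
  rw [gp, this, ← Finset.sum_neg_distrib]
  refine Finset.sum_congr rfl fun k _ => ?_
  rw [map_mul]
  simp [phi, gp]

noncomputable def Hs : PowerSeries (MvPolynomial ℕ ℚ) := PowerSeries.mk hp
noncomputable def Gs : PowerSeries (MvPolynomial ℕ ℚ) := PowerSeries.mk gp
noncomputable def Ps : PowerSeries (MvPolynomial ℕ ℚ) := PowerSeries.mk fun k => X k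

lemma smul_eq_natCast (m : ℕ) (p : MvPolynomial ℕ ℚ) : ((m : ℚ) + 1) • p = ((m : MvPolynomial ℕ ℚ) + 1) * p := by
  rw [Algebra.smul_def]
  push_cast
  simp [map_add, map_natCast]

lemma dHs : Hs.derivativeFun = Ps * Hs := by
  ext m
  rw [show Hs.derivativeFun = d⁄dX _ Hs from rfl, coeff_derivativeFun, PowerSeries.coeff_mul, Finset.Nat.sum_antidiagonal_eq_sum_range_succ_mk]
  simp only [Hs, Ps, coeff_mk]
  rw [mul_comm, ← smul_eq_natCast, hp_rec]

lemma dGs : Gs.derivativeFun = -(Ps * Gs) := by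
  ext m
  rw [show Gs.derivativeFun = d⁄dX _ Gs from rfl, coeff_derivativeFun, map_neg, PowerSeries.coeff_mul,
    Finset.Nat.sum_antidiagonal_eq_sum_range_succ_mk]
  simp only [Gs, Ps, coeff_mk]
  rw [mul_comm, ← smul_eq_natCast, gp_rec]

lemma GsHs : Gs * Hs = 1 := by
  have hd : (Gs * Hs).derivativeFun = 0 := by
    rw [derivativeFun_mul, dHs, dGs]
    simp only [smul_eq_mul]
    ring
  ext m
  induction m with
  | zero =>
      rw [PowerSeries.coeff_zero_eq_constantCoeff, map_mul]
      simp [Gs, Hs, gp_zero, hp_zero]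
  | succ k ih =>
      have := congrArg (PowerSeries.coeff k) hd
      rw [show (Gs * Hs).derivativeFun = d⁄dX _ (Gs * Hs) from rfl, coeff_derivativeFun] at this
      simp only [map_zero] at this
      have h2 : ((k:MvPolynomial ℕ ℚ) + 1) ≠ 0 := by
        exact_mod_cast Nat.cast_ne_zero (R := MvPolynomial ℕ ℚ).mpr (Nat.succ_ne_zero k)
      have h3 := (mul_eq_zero.mp this).resolve_right h2
      rw [h3, PowerSeries.coeff_one, if_neg (Nat.succ_ne_zero k)]

lemma conv (m : ℕ) : ∑ k ∈ range (m+1), gp k * hp (m - k) = if m = 0 then 1 else 0 := by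
  have := congrArg (PowerSeries.coeff m) GsHs
  rw [PowerSeries.coeff_mul, Finset.Nat.sum_antidiagonal_eq_sum_range_succ_mk, PowerSeries.coeff_one] at this
  simpa [Gs, Hs] using this

lemma conj_eq_ncard (f : ℕ → ℕ) (j : ℕ) : conj f j = {i : ℕ | j + 1 ≤ f i}.ncard := by
  rw [conj, ← Nat.card_coe_set_eq]; rfl

lemma plen_eq_ncard (f : ℕ → ℕ) : plen f = {i : ℕ | f i ≠ 0}.ncard := by
  rw [plen, ← Nat.card_coe_set_eq]; rfl

lemma ncard_Iic (b : ℕ) : (Set.Iic b).ncard = b + 1 := by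
  rw [Set.ncard_eq_toFinset_card', Set.toFinset_Iic, Nat.card_Iic]

lemma ncard_Iio (b : ℕ) : (Set.Iio b).ncard = b := by
  rw [Set.ncard_eq_toFinset_card', Set.toFinset_Iio, Nat.card_Iio]

lemma lower_mem_iff {S : Set ℕ} (hfin : S.Finite)
    (hlow : ∀ ⦃a b : ℕ⦄, a ≤ b → b ∈ S → a ∈ S) {i : ℕ} : i ∈ S ↔ i < S.ncard := by
  constructor
  · intro hi
    have h1 : Set.Iic i ⊆ S := fun a ha => hlow ha hi
    have h2 := Set.ncard_le_ncard h1 hfin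
    rw [ncard_Iic] at h2
    omega
  · intro hi
    by_contra hmem
    have h1 : S ⊆ Set.Iio i := by
      intro a ha
      by_contra hlt
      simp only [Set.mem_Iio, not_lt] at hlt
      exact hmem (hlow hlt ha)
    have h2 := Set.ncard_le_ncard h1 (Set.finite_Iio i)
    rw [ncard_Iio] at h2
    omega

/-- Bundle of hypotheses on a partition function. -/
structure Good (f : ℕ → ℕ) (n : ℕ) : Prop where
  anti : ∀ ⦃i j : ℕ⦄, i ≤ j → f j ≤ f i
  zero : ∃ N, ∀ i, N ≤ i → f i = 0
  len : plen f ≤ n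
  top : f 0 ≤ n

section GoodLemmas

variable {f : ℕ → ℕ} {n : ℕ}

lemma conj_set_finite (h : Good f n) (j : ℕ) : {i : ℕ | j + 1 ≤ f i}.Finite := by
  obtain ⟨N, hN⟩ := h.zero
  apply (Set.finite_Iio N).subset
  intro i hi
  simp only [Set.mem_setOf_eq] at hi
  by_contra hlt
  simp only [Set.mem_Iio, not_lt] at hlt
  rw [hN i hlt] at hi
  omega

lemma nonzero_set_finite (h : Good f n) : {i : ℕ | f i ≠ 0}.Finite := by
  have : {i : ℕ | f i ≠ 0} = {i : ℕ | 0 + 1 ≤ f i} := by ext i; simp; omega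
  rw [this]; exact conj_set_finite h 0

lemma lt_conj_iff (h : Good f n) {i j : ℕ} : i < conj f j ↔ j + 1 ≤ f i := by
  rw [conj_eq_ncard]
  exact (lower_mem_iff (conj_set_finite h j)
    (fun a b hab hb => le_trans hb (h.anti hab))).symm

lemma lt_plen_iff (h : Good f n) {i : ℕ} : i < plen f ↔ f i ≠ 0 := by
  rw [plen_eq_ncard]
  refine (lower_mem_iff (nonzero_set_finite h) ?_).symm
  intro a b hab hb
  simp only [Set.mem_setOf_eq] at *
  have := h.anti hab
  omega

lemma conj_anti (h : Good f n) : ∀ ⦃j j' : ℕ⦄, j ≤ j' → conj f j' ≤ conj f j := by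
  intro j j' hj
  rw [conj_eq_ncard, conj_eq_ncard]
  apply Set.ncard_le_ncard _ (conj_set_finite h j)
  intro i hi
  simp only [Set.mem_setOf_eq] at *
  omega

lemma conj_le_plen (h : Good f n) (j : ℕ) : conj f j ≤ plen f := by
  rw [conj_eq_ncard, plen_eq_ncard]
  apply Set.ncard_le_ncard _ (nonzero_set_finite h)
  intro i hi
  simp only [Set.mem_setOf_eq] at *
  omega

lemma conj_le_n (h : Good f n) (j : ℕ) : conj f j ≤ n := le_trans (conj_le_plen h j) h.len

lemma f_le_n (h : Good f n) (i : ℕ) : f i ≤ n := le_trans (h.anti (Nat.zero_le i)) h.top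

lemma f_eq_zero_of_n_le (h : Good f n) {i : ℕ} (hi : n ≤ i) : f i = 0 := by
  by_contra hne
  have := (lt_plen_iff h).mpr hne
  have := h.len
  omega

/-- `i < conj f j ↔ j < f i`. -/
lemma conj_symm (h : Good f n) {i j : ℕ} : i < conj f j ↔ j < f i := lt_conj_iff h

end GoodLemmas

/-- The merged indexing function. -/
noncomputable def Efun (f : ℕ → ℕ) (n : ℕ) : (Fin n ⊕ Fin n) → ℕ :=
  Sum.elim (fun i => f i + (n - 1 - (i : ℕ))) (fun j => n + (j : ℕ) - conj f (j : ℕ))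

lemma Efun_lt {f : ℕ → ℕ} {n : ℕ} (h : Good f n) (x : Fin n ⊕ Fin n) :
    Efun f n x < 2 * n := by
  cases x with
  | inl i =>
      have h1 : f i ≤ n := f_le_n h i
      have h2 : (i : ℕ) < n := i.isLt
      simp only [Efun, Sum.elim_inl]
      omega
  | inr j =>
      have h2 : (j : ℕ) < n := j.isLt
      simp only [Efun, Sum.elim_inr]
      omega

lemma Efun_inj {f : ℕ → ℕ} {n : ℕ} (h : Good f n) : Function.Injective (Efun f n) := by
  have key : ∀ (i j : Fin n), Efun f n (Sum.inl i) ≠ Efun f n (Sum.inr j) := by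
    intro i j
    simp only [Efun, Sum.elim_inl, Sum.elim_inr]
    have hin : (i : ℕ) < n := i.isLt
    have hjn : (j : ℕ) < n := j.isLt
    have hcn : conj f (j : ℕ) ≤ n := conj_le_n h _
    rcases Nat.lt_or_ge (j : ℕ) (f i) with hc | hc
    · have : (i : ℕ) < conj f (j : ℕ) := (conj_symm h).mpr hc
      omega
    · have : ¬ ((i : ℕ) < conj f (j : ℕ)) := by
        rw [conj_symm h]; omega
      omega
  intro x y hxy
  cases x with
  | inl i =>
      cases y with
      | inl i' =>
          simp only [Efun, Sum.elim_inl] at hxy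
          congr 1
          by_contra hne
          have hne' : (i : ℕ) ≠ (i' : ℕ) := fun hc => hne (Fin.ext hc)
          rcases Nat.lt_or_ge (i : ℕ) (i' : ℕ) with hlt | hge
          · have := h.anti (le_of_lt hlt)
            have : (i' : ℕ) < n := i'.isLt
            omega
          · have hlt : (i' : ℕ) < (i : ℕ) := by omega
            have := h.anti (le_of_lt hlt)
            have : (i : ℕ) < n := i.isLt
            omega
      | inr j => exact absurd hxy (key i j)
  | inr j =>
      cases y with
      | inl i => exact absurd hxy.symm (key i j)
      | inr j' =>
          simp only [Efun, Sum.elim_inr] at hxy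
          congr 1
          by_contra hne
          have hne' : (j : ℕ) ≠ (j' : ℕ) := fun hc => hne (Fin.ext hc)
          have hc1 : conj f (j : ℕ) ≤ n := conj_le_n h _
          have hc2 : conj f (j' : ℕ) ≤ n := conj_le_n h _
          rcases Nat.lt_or_ge (j : ℕ) (j' : ℕ) with hlt | hge
          · have := conj_anti h (le_of_lt hlt)
            omega
          · have hlt : (j' : ℕ) < (j : ℕ) := by omega
            have := conj_anti h (le_of_lt hlt)
            omega

/-- The merged indexing equivalence. -/
noncomputable def eEquiv {f : ℕ → ℕ} {n : ℕ} (h : Good f n) : (Fin n ⊕ Fin n) ≃ Fin (2 * n) :=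
  Equiv.ofBijective (fun x => ⟨Efun f n x, Efun_lt h x⟩)
    (by
      rw [Fintype.bijective_iff_injective_and_card]
      constructor
      · intro x y hxy
        apply Efun_inj h
        exact congrArg Fin.val hxy
      · simp [two_mul])

lemma eEquiv_val {f : ℕ → ℕ} {n : ℕ} (h : Good f n) (x : Fin n ⊕ Fin n) :
    (eEquiv h x : ℕ) = Efun f n x := rfl

lemma good_zero (n : ℕ) : Good (fun _ => 0) n := by
  refine ⟨fun i j _ => le_refl 0, ⟨0, fun i _ => rfl⟩, ?_, Nat.zero_le n⟩
  rw [plen_eq_ncard]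
  simp

lemma conj_zero_fn (j : ℕ) : conj (fun _ => 0) j = 0 := by
  rw [conj_eq_ncard]
  simp

lemma wsum_eq_sum_range {f : ℕ → ℕ} {n : ℕ} (h : Good f n) :
    wsum f = ∑ i ∈ range n, f i := by
  rw [wsum]
  apply finsum_eq_finset_sum_of_support_subset
  intro i hi
  simp only [Function.mem_support] at hi
  simp only [Finset.coe_range, Set.mem_Iio]
  by_contra hc
  push_neg at hc
  exact hi (f_eq_zero_of_n_le h hc)

lemma exists_swap {f : ℕ → ℕ} {n : ℕ} (h : Good f n) (hw : wsum f ≠ 0) :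
    ∃ (f' : ℕ → ℕ) (h' : Good f' n) (v₁ v₂ : Fin (2 * n)),
      v₁ ≠ v₂ ∧ wsum f' + 1 = wsum f ∧
      eEquiv h = (eEquiv h').trans (Equiv.swap v₁ v₂) := by
  have hL : 1 ≤ plen f := by
    by_contra hc
    push_neg at hc
    apply hw
    rw [wsum_eq_sum_range h]
    apply Finset.sum_eq_zero
    intro i _
    by_contra hne
    have := (lt_plen_iff h).mpr hne
    omega
  obtain ⟨i₀, hi₀def⟩ : ∃ i₀, i₀ = plen f - 1 := ⟨_, rfl⟩
  have hfi₀ : f i₀ ≠ 0 := (lt_plen_iff h).mp (by omega)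
  have hi₀n : i₀ < n := by have := h.len; omega
  obtain ⟨j₀, hj₀def⟩ : ∃ j₀, j₀ = f i₀ - 1 := ⟨_, rfl⟩
  have hj₀n : j₀ < n := by have := f_le_n h i₀; omega
  have hfgt : ∀ i, i₀ < i → f i = 0 := by
    intro i hi
    by_contra hne
    have := (lt_plen_iff h).mpr hne
    omega
  obtain ⟨f', hf'def⟩ : ∃ f', f' = Function.update f i₀ (f i₀ - 1) := ⟨_, rfl⟩
  have hf'i₀ : f' i₀ = f i₀ - 1 := by rw [hf'def, Function.update_self]
  have hf'ne : ∀ i, i ≠ i₀ → f' i = f i := by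
    intro i hi
    rw [hf'def, Function.update_of_ne hi]
  have hf'le : ∀ i, f' i ≤ f i := by
    intro i
    rcases eq_or_ne i i₀ with hi | hi
    · rw [hi, hf'i₀]; omega
    · rw [hf'ne i hi]
  have h' : Good f' n := by
    refine ⟨?_, ?_, ?_, le_trans (hf'le 0) h.top⟩
    · intro i j hij
      have h1 := h.anti hij
      rcases eq_or_ne i i₀ with hi | hi
      · rcases eq_or_ne j i₀ with hj | hj
        · rw [hi, hj]
        · have hj2 : f j = 0 := hfgt j (by omega)
          rw [hi, hf'i₀, hf'ne j hj]
          omega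
      · rcases eq_or_ne j i₀ with hj | hj
        · rw [hj] at h1
          rw [hj, hf'i₀, hf'ne i hi]
          omega
        · rw [hf'ne i hi, hf'ne j hj]
          omega
    · obtain ⟨N, hN⟩ := h.zero
      refine ⟨N + i₀ + 1, fun i hi => ?_⟩
      rw [hf'ne i (by omega), hN i (by omega)]
    · refine le_trans ?_ h.len
      rw [plen_eq_ncard, plen_eq_ncard]
      apply Set.ncard_le_ncard _ (nonzero_set_finite h)
      intro i hi
      simp only [Set.mem_setOf_eq] at *
      have := hf'le i
      omega
  have hwsum : wsum f' + 1 = wsum f := by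
    rw [wsum_eq_sum_range h, wsum_eq_sum_range h', hf'def,
      Finset.sum_update_of_mem (Finset.mem_range.mpr hi₀n),
      Finset.sum_eq_sum_sdiff_singleton_add (Finset.mem_range.mpr hi₀n) f]
    omega
  have hconjj₀ : conj f j₀ = i₀ + 1 := by
    rw [conj_eq_ncard]
    have hset : {i : ℕ | j₀ + 1 ≤ f i} = Set.Iic i₀ := by
      ext i
      simp only [Set.mem_setOf_eq, Set.mem_Iic]
      constructor
      · intro hi
        by_contra hc
        push_neg at hc
        have := hfgt i hc
        omega
      · intro hi
        have := h.anti hi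
        omega
    rw [hset, ncard_Iic]
  have hconjj₀' : conj f' j₀ = i₀ := by
    rw [conj_eq_ncard]
    have hset : {i : ℕ | j₀ + 1 ≤ f' i} = Set.Iio i₀ := by
      ext i
      simp only [Set.mem_setOf_eq, Set.mem_Iio]
      rcases eq_or_ne i i₀ with hi | hi
      · rw [hi, hf'i₀]
        omega
      · rw [hf'ne i hi]
        constructor
        · intro h2
          rcases Nat.lt_or_ge i i₀ with hc | hc
          · exact hc
          · have := hfgt i (by omega)
            omega
        · intro h2
          have := h.anti (le_of_lt h2)
          omega
    rw [hset, ncard_Iio]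
  have hconjne : ∀ j, j ≠ j₀ → conj f' j = conj f j := by
    intro j hj
    rw [conj_eq_ncard, conj_eq_ncard]
    congr 1
    ext i
    simp only [Set.mem_setOf_eq]
    rcases eq_or_ne i i₀ with hi | hi
    · rw [hi, hf'i₀]
      omega
    · rw [hf'ne i hi]
  refine ⟨f', h', eEquiv h (Sum.inl ⟨i₀, hi₀n⟩), eEquiv h' (Sum.inl ⟨i₀, hi₀n⟩), ?_, hwsum, ?_⟩
  · intro hc
    have hc2 := congrArg Fin.val hc
    rw [eEquiv_val, eEquiv_val] at hc2
    simp only [Efun, Sum.elim_inl] at hc2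
    rw [hf'i₀] at hc2
    omega
  · have hv1 : (eEquiv h (Sum.inl ⟨i₀, hi₀n⟩) : ℕ) = f i₀ + (n - 1 - i₀) := rfl
    have hv2 : (eEquiv h' (Sum.inl ⟨i₀, hi₀n⟩) : ℕ) = (f i₀ - 1) + (n - 1 - i₀) := by
      rw [eEquiv_val]
      simp only [Efun, Sum.elim_inl]
      rw [hf'i₀]
    have hb1 : eEquiv h (Sum.inr ⟨j₀, hj₀n⟩) = eEquiv h' (Sum.inl ⟨i₀, hi₀n⟩) := by
      apply Fin.ext
      rw [eEquiv_val, hv2]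
      simp only [Efun, Sum.elim_inr]
      rw [hconjj₀]
      omega
    have hb2 : eEquiv h' (Sum.inr ⟨j₀, hj₀n⟩) = eEquiv h (Sum.inl ⟨i₀, hi₀n⟩) := by
      apply Fin.ext
      rw [eEquiv_val, hv1]
      simp only [Efun, Sum.elim_inr]
      rw [hconjj₀']
      omega
    apply Equiv.ext
    intro x
    rw [Equiv.trans_apply]
    rcases eq_or_ne x (Sum.inl ⟨i₀, hi₀n⟩) with rfl | hx1
    · rw [Equiv.swap_apply_right]
    rcases eq_or_ne x (Sum.inr ⟨j₀, hj₀n⟩) with rfl | hx2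
    · rw [hb2, Equiv.swap_apply_left, hb1]
    · have hfix1 : eEquiv h' x ≠ eEquiv h (Sum.inl ⟨i₀, hi₀n⟩) := by
        rw [← hb2]
        exact fun hc => hx2 ((eEquiv h').injective hc)
      have hfix2 : eEquiv h' x ≠ eEquiv h' (Sum.inl ⟨i₀, hi₀n⟩) := by
        exact fun hc => hx1 ((eEquiv h').injective hc)
      rw [Equiv.swap_apply_of_ne_of_ne hfix1 hfix2]
      apply Fin.ext
      rw [eEquiv_val, eEquiv_val]
      cases x with
      | inl i =>
          simp only [Efun, Sum.elim_inl]
          rw [hf'ne i]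
          intro hc
          exact hx1 (by congr 1; exact Fin.ext hc)
      | inr j =>
          simp only [Efun, Sum.elim_inr]
          rw [hconjne j]
          intro hc
          exact hx2 (by congr 1; exact Fin.ext hc)

lemma sign_eEquiv {n : ℕ} (m : ℕ) : ∀ (f : ℕ → ℕ) (h : Good f n), wsum f = m →
    Equiv.Perm.sign ((eEquiv h).trans (eEquiv (good_zero n)).symm) = (-1) ^ m := by
  induction m with
  | zero =>
      intro f h hw
      have hf : f = fun _ => 0 := by
        funext i
        rcases Nat.lt_or_ge i n with hi | hi
        · rw [wsum_eq_sum_range h] at hw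
          exact Finset.sum_eq_zero_iff.mp hw i (Finset.mem_range.mpr hi)
        · exact f_eq_zero_of_n_le h hi
      subst hf
      rw [show h = good_zero n from rfl, Equiv.self_trans_symm]
      simp
  | succ k ih =>
      intro f h hw
      obtain ⟨f', h', v₁, v₂, hne, hwsum, heq⟩ := exists_swap h (by omega)
      have hw' : wsum f' = k := by omega
      rw [heq]
      have hsplit : (((eEquiv h').trans (Equiv.swap v₁ v₂)).trans (eEquiv (good_zero n)).symm)
          = (Equiv.permCongr (eEquiv (good_zero n)).symm (Equiv.swap v₁ v₂))
            * ((eEquiv h').trans (eEquiv (good_zero n)).symm) := by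
        apply Equiv.ext
        intro x
        simp [Equiv.Perm.mul_apply, Equiv.permCongr_apply]
      rw [hsplit, map_mul, Equiv.Perm.sign_permCongr, Equiv.Perm.sign_swap hne, ih f' h' hw']
      rw [pow_succ, mul_comm]

lemma sign_prod {f g : ℕ → ℕ} {n : ℕ} (hμ : Good f n) (hν : Good g n) :
    Equiv.Perm.sign ((eEquiv hν).trans (eEquiv hμ).symm) = (-1) ^ (wsum f + wsum g) := by
  have h1 := sign_eEquiv (wsum g) g hν rfl
  have h2 := sign_eEquiv (wsum f) f hμ rfl
  have hsplit : (eEquiv hν).trans (eEquiv hμ).symm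
      = ((eEquiv (good_zero n)).trans (eEquiv hμ).symm)
        * ((eEquiv hν).trans (eEquiv (good_zero n)).symm) := by
    apply Equiv.ext
    intro x
    simp [Equiv.Perm.mul_apply]
  have h3 : ((eEquiv (good_zero n)).trans (eEquiv hμ).symm)
      = ((eEquiv hμ).trans (eEquiv (good_zero n)).symm).symm := by
    apply Equiv.ext
    intro x
    simp
  rw [hsplit, map_mul, h3, Equiv.Perm.sign_symm, h1, h2, ← pow_add, add_comm]

noncomputable def gInt (d : ℤ) : MvPolynomial ℕ ℚ := phi (hInt d)

lemma hInt_neg {d : ℤ} (hd : d < 0) : hInt d = 0 := by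
  rw [hInt, if_neg (by omega)]

lemma gInt_neg {d : ℤ} (hd : d < 0) : gInt d = 0 := by
  rw [gInt, hInt_neg hd, map_zero]

lemma hInt_ofNat (k : ℕ) : hInt (k : ℤ) = hp k := by
  rw [hInt, if_pos (by omega), Int.toNat_natCast]

lemma gInt_ofNat (k : ℕ) : gInt (k : ℤ) = gp k := by
  rw [gInt, hInt_ofNat]; rfl

/-- The Toeplitz matrices of `h` and of `g = φ(h)`. -/
noncomputable def HM (N : ℕ) : Matrix (Fin N) (Fin N) (MvPolynomial ℕ ℚ) :=
  Matrix.of fun x y => hInt ((y : ℤ) - (x : ℤ))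

noncomputable def GM (N : ℕ) : Matrix (Fin N) (Fin N) (MvPolynomial ℕ ℚ) :=
  Matrix.of fun x y => gInt ((y : ℤ) - (x : ℤ))

lemma GM_mul_HM (N : ℕ) : GM N * HM N = 1 := by
  refine Matrix.ext fun x z => ?_
  rw [Matrix.mul_apply]
  simp only [GM, HM, Matrix.of_apply]
  rcases Nat.lt_or_ge (z : ℕ) (x : ℕ) with hlt | hge
  · rw [Matrix.one_apply_ne (by intro hc; rw [hc] at hlt; omega)]
    apply Finset.sum_eq_zero
    intro y _
    rcases Nat.lt_or_ge (y : ℕ) (x : ℕ) with hy | hy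
    · rw [gInt_neg (by omega), zero_mul]
    · rw [hInt_neg (by omega), mul_zero]
  · have hsum : ∑ y : Fin N, gInt ((y : ℤ) - (x : ℤ)) * hInt ((z : ℤ) - (y : ℤ))
        = ∑ y ∈ Finset.range N, gInt ((y : ℤ) - (x : ℤ)) * hInt ((z : ℤ) - (y : ℤ)) := by
      rw [← Fin.sum_univ_eq_sum_range (fun y : ℕ => gInt ((y : ℤ) - (x : ℤ)) * hInt ((z : ℤ) - (y : ℤ))) N]
    rw [hsum]
    have hsub : Finset.Ico (x : ℕ) ((z : ℕ) + 1) ⊆ Finset.range N := by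
      intro a ha
      rw [Finset.mem_Ico] at ha
      rw [Finset.mem_range]
      have := z.isLt
      omega
    rw [← Finset.sum_subset hsub]
    · rw [Finset.sum_Ico_eq_sum_range]
      have hd : (z : ℕ) + 1 - (x : ℕ) = ((z : ℕ) - (x : ℕ)) + 1 := by omega
      rw [hd]
      have hterm : ∀ k ∈ Finset.range (((z : ℕ) - (x : ℕ)) + 1),
          gInt ((((x : ℕ) + k : ℕ) : ℤ) - (x : ℤ)) * hInt ((z : ℤ) - (((x : ℕ) + k : ℕ) : ℤ))
          = gp k * hp ((z : ℕ) - (x : ℕ) - k) := by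
        intro k hk
        rw [Finset.mem_range] at hk
        have e1 : (((x : ℕ) + k : ℕ) : ℤ) - (x : ℤ) = (k : ℤ) := by push_cast; ring
        have e2 : (z : ℤ) - (((x : ℕ) + k : ℕ) : ℤ) = (((z : ℕ) - (x : ℕ) - k : ℕ) : ℤ) := by
          push_cast
          omega
        rw [e1, e2, gInt_ofNat, hInt_ofNat]
      rw [Finset.sum_congr rfl hterm, conv]
      rcases eq_or_ne ((z:ℕ) - (x:ℕ)) 0 with h0 | h0
      · have hxz : x = z := Fin.ext (by omega)
        rw [if_pos h0, hxz, Matrix.one_apply_eq]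
      · rw [if_neg h0, Matrix.one_apply_ne (by intro hc; rw [hc] at h0; omega)]
    · intro y hy hnotin
      rw [Finset.mem_range] at hy
      rw [Finset.mem_Ico] at hnotin
      push_neg at hnotin
      rcases Nat.lt_or_ge y (x : ℕ) with hc | hc
      · rw [gInt_neg (by omega), zero_mul]
      · have : (z : ℕ) + 1 ≤ y := hnotin hc
        rw [hInt_neg (by omega), mul_zero]

lemma det_GM (N : ℕ) : (GM N).det = 1 := by
  have htri : (GM N).BlockTriangular id := by
    intro x y hxy
    simp only [id_eq] at hxy
    simp only [GM, Matrix.of_apply]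
    apply gInt_neg
    have : (y : ℕ) < (x : ℕ) := hxy
    omega
  rw [Matrix.det_of_upperTriangular htri]
  have : ∀ x : Fin N, GM N x x = 1 := by
    intro x
    simp only [GM, Matrix.of_apply, sub_self]
    rw [show (0 : ℤ) = ((0 : ℕ) : ℤ) from rfl, gInt_ofNat, gp_zero]
  rw [Finset.prod_congr rfl (fun x _ => this x)]
  simp

theorem main {f g : ℕ → ℕ} {n : ℕ} (hμ : Good f n) (hν : Good g n) :
    phi (Sdet f g n) = (-1 : MvPolynomial ℕ ℚ) ^ (wsum f + wsum g) * Sdet (conj f) (conj g) n := by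
  set eμ := eEquiv hμ with heμ
  set eν := eEquiv hν with heν
  set Gh := (GM (2*n)).submatrix eν eμ with hGhdef
  set Hh := (HM (2*n)).submatrix eμ eν with hHhdef
  have hGH : Gh * Hh = 1 := by
    rw [hGhdef, hHhdef, Matrix.submatrix_mul_equiv (GM (2*n)) (HM (2*n)) eν eμ eν,
      GM_mul_HM, Matrix.submatrix_one_equiv]
  set τ : Equiv.Perm (Fin n ⊕ Fin n) := eν.trans eμ.symm with hτ
  have hdetGh : Gh.det = ((Equiv.Perm.sign τ : ℤ) : MvPolynomial ℕ ℚ) := by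
    have hre : Gh = ((GM (2*n)).submatrix eμ eμ).submatrix τ id := by
      refine Matrix.ext fun u v => ?_
      simp only [hGhdef, Matrix.submatrix_apply, hτ, Equiv.trans_apply, Equiv.apply_symm_apply,
        id_eq]
    rw [hre, Matrix.det_permute, Matrix.det_submatrix_equiv_self, det_GM, mul_one]
  set G11 := Gh.toBlocks₁₁ with hG11
  set G12 := Gh.toBlocks₁₂ with hG12
  set G21 := Gh.toBlocks₂₁ with hG21
  set G22 := Gh.toBlocks₂₂ with hG22
  set H12 := Hh.toBlocks₁₂ with hH12
  set H22 := Hh.toBlocks₂₂ with hH22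
  have hGb : Gh = Matrix.fromBlocks G11 G12 G21 G22 := (Matrix.fromBlocks_toBlocks Gh).symm
  have hHb : Hh = Matrix.fromBlocks Hh.toBlocks₁₁ H12 Hh.toBlocks₂₁ H22 :=
    (Matrix.fromBlocks_toBlocks Hh).symm
  have hprod := hGH
  rw [hGb, hHb, Matrix.fromBlocks_multiply, ← Matrix.fromBlocks_one] at hprod
  have hb12 : Matrix.toBlocks₁₂ (1 : Matrix (Fin n ⊕ Fin n) (Fin n ⊕ Fin n) (MvPolynomial ℕ ℚ))
      = 0 := by rw [← Matrix.fromBlocks_one, Matrix.toBlocks_fromBlocks₁₂]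
  have hb22 : Matrix.toBlocks₂₂ (1 : Matrix (Fin n ⊕ Fin n) (Fin n ⊕ Fin n) (MvPolynomial ℕ ℚ))
      = 1 := by rw [← Matrix.fromBlocks_one, Matrix.toBlocks_fromBlocks₂₂]
  have h12 : G11 * H12 + G12 * H22 = 0 := by
    have := congrArg Matrix.toBlocks₁₂ hprod
    simpa [Matrix.toBlocks_fromBlocks₁₂, hb12] using this
  have h22 : G21 * H12 + G22 * H22 = 1 := by
    have := congrArg Matrix.toBlocks₂₂ hprod
    simpa [Matrix.toBlocks_fromBlocks₂₂, hb22] using this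
  have hKmul : Gh * (Matrix.fromBlocks 1 H12 0 H22) = Matrix.fromBlocks G11 0 G21 1 := by
    rw [hGb, Matrix.fromBlocks_multiply]
    rw [h12, h22]
    simp only [Matrix.mul_one, Matrix.mul_zero, add_zero]
  have hdet := congrArg Matrix.det hKmul
  rw [Matrix.det_mul, Matrix.det_fromBlocks_zero₂₁, Matrix.det_fromBlocks_zero₁₂,
    Matrix.det_one, one_mul, mul_one] at hdet
  -- `hdet : Gh.det * H22.det = G11.det`
  have hlhs : phi (Sdet f g n) = G11.det := by
    rw [Sdet, ← Matrix.det_transpose G11]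
    rw [AlgHom.map_det phi]
    congr 1
    refine Matrix.ext fun i j => ?_
    show phi (hInt ((f i : ℤ) - (g j : ℤ) - (i : ℤ) + (j : ℤ)))
      = G11 j i
    have hentry : G11 j i = gInt (((Efun f n (Sum.inl i) : ℕ) : ℤ) - ((Efun g n (Sum.inl j) : ℕ) : ℤ)) := by
      rw [hG11]
      rfl
    rw [hentry]
    have harg : ((Efun f n (Sum.inl i) : ℕ) : ℤ) - ((Efun g n (Sum.inl j) : ℕ) : ℤ)
        = (f i : ℤ) - (g j : ℤ) - ((i : ℕ) : ℤ) + ((j : ℕ) : ℤ) := by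
      simp only [Efun, Sum.elim_inl]
      have h1 : (i : ℕ) < n := i.isLt
      have h2 : (j : ℕ) < n := j.isLt
      push_cast
      omega
    rw [harg]
    rfl
  have hrhs : Sdet (conj f) (conj g) n = H22.det := by
    rw [Sdet]
    congr 1
    refine Matrix.ext fun i j => ?_
    have hentry : H22 i j = hInt (((Efun g n (Sum.inr j) : ℕ) : ℤ) - ((Efun f n (Sum.inr i) : ℕ) : ℤ)) := by
      rw [hH22]
      rfl
    rw [Matrix.of_apply, hentry]
    congr 1
    simp only [Efun, Sum.elim_inr]
    have h1 : (i : ℕ) < n := i.isLt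
    have h2 : (j : ℕ) < n := j.isLt
    have h3 : conj f (i : ℕ) ≤ n := conj_le_n hμ _
    have h4 : conj g (j : ℕ) ≤ n := conj_le_n hν _
    push_cast
    omega
  have hsign : ((Equiv.Perm.sign τ : ℤ) : MvPolynomial ℕ ℚ)
      = (-1 : MvPolynomial ℕ ℚ) ^ (wsum f + wsum g) := by
    rw [hτ, heν, heμ, sign_prod hμ hν]
    push_cast
    ring
  rw [hlhs, ← hdet, hdetGh, hsign, hrhs]

end SkewAux

/-- The ℚ-algebra endomorphism of ℚ[p_1, p_2, …] sending `p_k ↦ −p_k` maps the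
skew Schur polynomial `S_{μ/ν}` to `(−1)^{|μ|+|ν|} S_{μᵀ/νᵀ}`, for any
determinant size `n ≥ max(ℓ(μ), ℓ(ν), μ_1, ν_1)`. -/
theorem skew_schur_neg_p (μ ν : NPartition) (n : ℕ)
    (h1 : plen μ.part ≤ n) (h2 : plen ν.part ≤ n)
    (h3 : μ.part 0 ≤ n) (h4 : ν.part 0 ≤ n) :
    MvPolynomial.aeval (fun k : ℕ => - (MvPolynomial.X k : MvPolynomial ℕ ℚ))
        (Sdet μ.part ν.part n)
      = (-1) ^ (wsum μ.part + wsum ν.part) * Sdet (conj μ.part) (conj ν.part) n := by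
  have hμ : SkewAux.Good μ.part n := ⟨μ.antitone, μ.eventually_zero, h1, h3⟩
  have hν : SkewAux.Good ν.part n := ⟨ν.antitone, ν.eventually_zero, h2, h4⟩
  exact SkewAux.main hμ hν
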